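/- Let n ≥ 1, let A be an n×n real matrix that is nonnegative, row-stochastic, and irreducible, and let α ∈ (0,1). Set A_α = (1−α)I + αA. Let π ∈ ℝⁿ be a nonnegative vector with entries summing to 1 and πᵀA = πᵀ. Then the spectral radius of A_α − 𝟏πᵀ is strictly less than 1, where 𝟏 ∈ ℝⁿ is the all-ones vector. -/

import Mathlib

open Polynomial Matrix Finset

lemma charpoly_eval_eq_det {n : ℕ} (M : Matrix (Fin n) (Fin n) ℂ) (z : ℂ) :
    M.charpoly.eval z = (z • (1 : Matrix (Fin n) (Fin n) ℂ) - M).det := by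
  rw [Matrix.charpoly, ← Polynomial.coe_evalRingHom, RingHom.map_det]
  congr 1
  ext i j
  by_cases h : i = j
  · subst h
    simp [Matrix.charmatrix_apply_eq, Matrix.one_apply]
  · simp [Matrix.charmatrix_apply_ne _ _ _ h, Matrix.one_apply, h]

lemma exists_eigvec_of_root {n : ℕ} (M : Matrix (Fin n) (Fin n) ℂ) {z : ℂ}
    (hz : z ∈ M.charpoly.roots) : ∃ v : Fin n → ℂ, v ≠ 0 ∧ M.mulVec v = z • v := by
  have hroot : M.charpoly.IsRoot z := (Polynomial.mem_roots ((Matrix.charpoly_monic M).ne_zero)).1 hz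
  have hdet : (z • (1 : Matrix (Fin n) (Fin n) ℂ) - M).det = 0 := by
    rw [← charpoly_eval_eq_det]; exact hroot
  obtain ⟨v, hv0, hv⟩ := (Matrix.exists_mulVec_eq_zero_iff).2 hdet
  refine ⟨v, hv0, ?_⟩
  rw [Matrix.sub_mulVec, Matrix.smul_mulVec, Matrix.one_mulVec, sub_eq_zero] at hv
  exact hv.symm

lemma pow_nonneg_row {n : ℕ} (A : Matrix (Fin n) (Fin n) ℝ)
    (hA_nonneg : ∀ i j, 0 ≤ A i j) (hA_row : ∀ i, ∑ j, A i j = 1) (k : ℕ) :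
    (∀ i j, 0 ≤ (A ^ k) i j) ∧ (∀ i, ∑ j, (A ^ k) i j = 1) := by
  induction k with
  | zero =>
    constructor
    · intro i j; simp [Matrix.one_apply]; positivity
    · intro i; simp [Matrix.one_apply]
  | succ k ih =>
    have hmul : A ^ (k + 1) = A ^ k * A := pow_succ A k
    constructor
    · intro i j
      rw [hmul, Matrix.mul_apply]
      exact Finset.sum_nonneg fun l _ => mul_nonneg (ih.1 i l) (hA_nonneg l j)
    · intro i
      rw [hmul]
      simp only [Matrix.mul_apply]
      rw [Finset.sum_comm]
      calc ∑ l, ∑ j, (A ^ k) i l * A l j = ∑ l, (A ^ k) i l * ∑ j, A l j := by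
            simp [Finset.mul_sum]
        _ = 1 := by simp [hA_row, ih.2 i]

lemma const_of_fixed {n : ℕ} (A : Matrix (Fin n) (Fin n) ℝ)
    (hA_nonneg : ∀ i j, 0 ≤ A i j) (hA_row : ∀ i, ∑ j, A i j = 1)
    (hA_irr : ∀ i j, ∃ k : ℕ, 0 < k ∧ 0 < (A ^ k) i j)
    (w : Fin n → ℝ) (hw : A.mulVec w = w) : ∀ i j, w i = w j := by
  have hpow : ∀ k : ℕ, (A ^ k).mulVec w = w := by
    intro k
    induction k with
    | zero => simp
    | succ k ih => rw [pow_succ, ← Matrix.mulVec_mulVec, hw, ih]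
  intro i j
  have hne : (Finset.univ : Finset (Fin n)).Nonempty := ⟨i, Finset.mem_univ i⟩
  obtain ⟨i₀, -, hmax⟩ := Finset.exists_max_image Finset.univ w hne
  suffices h : ∀ j, w j = w i₀ by rw [h i, h j]
  intro j
  obtain ⟨k, -, hk⟩ := hA_irr i₀ j
  have hk_nonneg := (pow_nonneg_row A hA_nonneg hA_row k).1
  have hk_row := (pow_nonneg_row A hA_nonneg hA_row k).2
  have heq : ∑ l, (A ^ k) i₀ l * w l = ∑ l, (A ^ k) i₀ l * w i₀ := by
    have h1 : ∑ l, (A ^ k) i₀ l * w l = w i₀ := by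
      have := congrFun (hpow k) i₀
      simpa [Matrix.mulVec, dotProduct] using this
    have h2 : ∑ l, (A ^ k) i₀ l * w i₀ = w i₀ := by
      rw [← Finset.sum_mul, hk_row i₀, one_mul]
    rw [h1, h2]
  have hterm := (Finset.sum_eq_sum_iff_of_le
    (fun l _ => mul_le_mul_of_nonneg_left (hmax l (Finset.mem_univ l)) (hk_nonneg i₀ l))).1
    heq j (Finset.mem_univ j)
  exact mul_left_cancel₀ (ne_of_gt hk) hterm

/-- The spectral radius of a real square matrix: the maximum modulus of the complex
roots of its characteristic polynomial. -/
noncomputable def specRad {n : ℕ} (M : Matrix (Fin n) (Fin n) ℝ) : ℝ :=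
  sSup {x : ℝ | ∃ z ∈ (M.map (Complex.ofReal : ℝ → ℂ)).charpoly.roots, ‖z‖ = x}

set_option maxHeartbeats 1000000 in
/-- For an irreducible row-stochastic matrix `A`, `α ∈ (0,1)`,
`A_α = (1-α)I + αA`, and `π` the stochastic left eigenvector of `A`,
the spectral radius of `A_α - 𝟏πᵀ` is strictly less than 1. -/
theorem stmt_2 (n : ℕ) (hn : 1 ≤ n) (A : Matrix (Fin n) (Fin n) ℝ) (α : ℝ)
    (hα0 : 0 < α) (hα1 : α < 1)
    (hA_nonneg : ∀ i j, 0 ≤ A i j)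
    (hA_row : ∀ i, ∑ j, A i j = 1)
    (hA_irr : ∀ i j, ∃ k : ℕ, 0 < k ∧ 0 < (A ^ k) i j)
    (π : Fin n → ℝ) (hπ_nonneg : ∀ i, 0 ≤ π i) (hπ_sum : ∑ i, π i = 1)
    (hπA : Matrix.vecMul π A = π) :
    specRad ((1 - α) • (1 : Matrix (Fin n) (Fin n) ℝ) + α • A
      - Matrix.of (fun _ j => π j)) < 1 := by
  set B : Matrix (Fin n) (Fin n) ℝ :=
    (1 - α) • (1 : Matrix (Fin n) (Fin n) ℝ) + α • A - Matrix.of (fun _ j => π j) with hBdef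
  set M' : Fin n → Fin n → ℝ :=
    fun i j => (1 - α) * (if i = j then 1 else 0) + α * A i j with hM'def
  have hB_entry : ∀ i j, B i j = M' i j - π j := by
    intro i j
    simp [hBdef, hM'def, Matrix.sub_apply, Matrix.add_apply, Matrix.smul_apply,
      Matrix.one_apply, smul_eq_mul]
  have hM'_nonneg : ∀ i j, 0 ≤ M' i j := by
    intro i j
    have := hA_nonneg i j
    by_cases h : i = j <;> simp [hM'def, h] <;> nlinarith [hA_nonneg i j, hA_nonneg j j]
  have hM'_row : ∀ i, ∑ j, M' i j = 1 := by
    intro i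
    simp only [hM'def]
    rw [Finset.sum_add_distrib, ← Finset.mul_sum, ← Finset.mul_sum,
      Finset.sum_ite_eq Finset.univ i (fun _ => (1 : ℝ)), hA_row i]
    simp
  set p : Polynomial ℂ := (B.map (Complex.ofReal : ℝ → ℂ)).charpoly with hp
  have hS_fin : {x : ℝ | ∃ z ∈ p.roots, ‖z‖ = x}.Finite := by
    have : {x : ℝ | ∃ z ∈ p.roots, ‖z‖ = x}
        = (fun z : ℂ => ‖z‖) '' (p.roots.toFinset : Set ℂ) := by
      ext x
      simp [Multiset.mem_toFinset]
    rw [this]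
    exact (p.roots.toFinset.finite_toSet).image _
  have hS_ne : {x : ℝ | ∃ z ∈ p.roots, ‖z‖ = x}.Nonempty := by
    have hdeg : p.degree ≠ 0 := by
      rw [hp, Matrix.charpoly_degree_eq_dim]
      simp only [Fintype.card_fin]
      exact_mod_cast Nat.one_le_iff_ne_zero.mp hn
    obtain ⟨z, hz⟩ := Complex.isAlgClosed.exists_root p hdeg
    have hpm : p.Monic := hp ▸ Matrix.charpoly_monic _
    refine ⟨‖z‖, ?_⟩
    simp only [Set.mem_setOf_eq]
    refine ⟨z, ?_, rfl⟩
    exact (Polynomial.mem_roots hpm.ne_zero).2 hz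
  have hbound : ∀ x ∈ {x : ℝ | ∃ z ∈ p.roots, ‖z‖ = x}, x < 1 := by
    rintro x ⟨z, hz, rfl⟩
    obtain ⟨v, hv0, hv⟩ := exists_eigvec_of_root _ hz
    have hmul : ∀ i, ∑ j, ((B i j : ℝ) : ℂ) * v j = z * v i := by
      intro i
      have := congrFun hv i
      simpa [Matrix.mulVec, dotProduct, Matrix.map_apply, Pi.smul_apply,
        smul_eq_mul] using this
    have hπA' : ∀ j, ∑ i, π i * A i j = π j := by
      intro j
      have := congrFun hπA j
      simpa [Matrix.vecMul, dotProduct] using this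
    have hπB : ∀ j, ∑ i, π i * B i j = 0 := by
      intro j
      have e : ∀ i, π i * B i j
          = (1 - α) * (if i = j then π i else 0) + α * (π i * A i j) - π i * π j := by
        intro i
        rw [hB_entry i j]
        by_cases h : i = j <;> simp [hM'def, h] <;> ring
      rw [Finset.sum_congr rfl fun i _ => e i, Finset.sum_sub_distrib,
        Finset.sum_add_distrib, ← Finset.mul_sum, ← Finset.mul_sum, ← Finset.sum_mul,
        Finset.sum_ite_eq' Finset.univ j π, hπA' j, hπ_sum]
      simp
      ring
    set s : ℂ := ∑ i, ((π i : ℝ) : ℂ) * v i with hs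
    have hzs : z * s = 0 := by
      have e1 : z * s = ∑ i, ((π i : ℝ) : ℂ) * (z * v i) := by
        rw [hs, Finset.mul_sum]
        exact Finset.sum_congr rfl fun i _ => by ring
      rw [e1, Finset.sum_congr rfl fun i _ => by
        rw [← hmul i, Finset.mul_sum], Finset.sum_comm]
      have e2 : ∀ j, ∑ i, ((π i : ℝ) : ℂ) * (((B i j : ℝ) : ℂ) * v j)
          = ((∑ i, π i * B i j : ℝ) : ℂ) * v j := by
        intro j
        push_cast
        rw [Finset.sum_mul]
        exact Finset.sum_congr rfl fun i _ => by ring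
      rw [Finset.sum_congr rfl fun j _ => e2 j]
      simp [hπB]
    by_cases hz0 : z = 0
    · simp [hz0]
    have hs0 : s = 0 := by
      rcases mul_eq_zero.1 hzs with h | h
      · exact absurd h hz0
      · exact h
    have hmul' : ∀ i, ∑ j, ((M' i j : ℝ) : ℂ) * v j = z * v i := by
      intro i
      have h1 := hmul i
      rw [Finset.sum_congr rfl fun j _ => show ((B i j : ℝ) : ℂ) * v j
          = ((M' i j : ℝ) : ℂ) * v j - ((π j : ℝ) : ℂ) * v j by
        rw [hB_entry i j]; push_cast; ring, Finset.sum_sub_distrib] at h1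
      rw [show (∑ j, ((π j : ℝ) : ℂ) * v j) = s from rfl, hs0, sub_zero] at h1
      exact h1
    by_cases hz1 : z = 1
    · exfalso
      have hAv : ∀ i, ∑ j, ((A i j : ℝ) : ℂ) * v j = v i := by
        intro i
        have h1 := hmul' i
        rw [hz1, one_mul] at h1
        have e : ∀ j, ((M' i j : ℝ) : ℂ) * v j
            = (if i = j then ((1 - α : ℝ) : ℂ) * v j else 0)
              + ((α : ℝ) : ℂ) * (((A i j : ℝ) : ℂ) * v j) := by
          intro j
          by_cases h : i = j <;> simp [hM'def, h] <;> push_cast <;> ring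
        rw [Finset.sum_congr rfl fun j _ => e j, Finset.sum_add_distrib,
          Finset.sum_ite_eq Finset.univ i (fun j => ((1 - α : ℝ) : ℂ) * v j),
          ← Finset.mul_sum] at h1
        simp only [Finset.mem_univ, if_true] at h1
        have hα : ((α : ℝ) : ℂ) ≠ 0 := by exact_mod_cast ne_of_gt hα0
        apply mul_left_cancel₀ hα
        push_cast at h1 ⊢
        linear_combination h1
      have hre : A.mulVec (fun i => (v i).re) = (fun i => (v i).re) := by
        funext i
        have := congrArg Complex.re (hAv i)
        simpa [Matrix.mulVec, dotProduct, Complex.re_sum] using this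
      have him : A.mulVec (fun i => (v i).im) = (fun i => (v i).im) := by
        funext i
        have := congrArg Complex.im (hAv i)
        simpa [Matrix.mulVec, dotProduct, Complex.im_sum] using this
      have hconst : ∀ i j, v i = v j := by
        intro i j
        exact Complex.ext (const_of_fixed A hA_nonneg hA_row hA_irr _ hre i j)
          (const_of_fixed A hA_nonneg hA_row hA_irr _ him i j)
      set i₀ : Fin n := ⟨0, hn⟩
      have hs_eq : s = v i₀ := by
        rw [hs, Finset.sum_congr rfl fun i _ => by rw [hconst i i₀],
          ← Finset.sum_mul]
        rw [show (∑ i, ((π i : ℝ) : ℂ)) = ((∑ i, π i : ℝ) : ℂ) from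
          (Complex.ofReal_sum _ _).symm, hπ_sum, Complex.ofReal_one, one_mul]
      apply hv0
      funext i
      rw [hconst i i₀, ← hs_eq, hs0]
      rfl
    · obtain ⟨i, -, hmax⟩ := Finset.exists_max_image Finset.univ
        (fun i => ‖v i‖) ⟨⟨0, hn⟩, Finset.mem_univ _⟩
      set m := ‖v i‖ with hm
      have hm_pos : 0 < m := by
        obtain ⟨i₁, hi₁⟩ := Function.ne_iff.1 hv0
        calc (0 : ℝ) < ‖v i₁‖ := by
              simpa using norm_pos_iff.2 hi₁
          _ ≤ m := hmax i₁ (Finset.mem_univ i₁)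
      set d : ℝ := M' i i with hd
      have hd0 : 0 < d := by
        have h := hA_nonneg i i
        simp only [hd, hM'def]
        simp only [if_pos rfl, if_true, eq_self_iff_true, mul_one]
        nlinarith
      have hd1 : d ≤ 1 := by
        have hAii : A i i ≤ 1 := by
          rw [← hA_row i]
          exact Finset.single_le_sum (fun j _ => hA_nonneg i j) (Finset.mem_univ i)
        simp only [hd, hM'def]
        simp only [if_pos rfl, if_true, eq_self_iff_true, mul_one]
        nlinarith
      have hrow_erase : ∑ j ∈ Finset.univ.erase i, M' i j = 1 - d := by
        have h1 := hM'_row i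
        rw [← Finset.add_sum_erase _ _ (Finset.mem_univ i)] at h1
        linarith
      have heq : (z - (d : ℂ)) * v i = ∑ j ∈ Finset.univ.erase i, ((M' i j : ℝ) : ℂ) * v j := by
        have h1 := hmul' i
        rw [← Finset.add_sum_erase _ _ (Finset.mem_univ i)] at h1
        linear_combination -h1
      have habs : ‖z - (d : ℂ)‖ * m ≤ (1 - d) * m := by
        calc ‖z - (d : ℂ)‖ * m = ‖(z - (d : ℂ)) * v i‖ := by
              rw [norm_mul]
          _ = ‖∑ j ∈ Finset.univ.erase i, ((M' i j : ℝ) : ℂ) * v j‖ := by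
              rw [heq]
          _ ≤ ∑ j ∈ Finset.univ.erase i, ‖((M' i j : ℝ) : ℂ) * v j‖ :=
              norm_sum_le _ _
          _ = ∑ j ∈ Finset.univ.erase i, M' i j * ‖v j‖ := by
              refine Finset.sum_congr rfl fun j _ => ?_
              rw [norm_mul, Complex.norm_real, Real.norm_eq_abs, abs_of_nonneg (hM'_nonneg i j)]
          _ ≤ ∑ j ∈ Finset.univ.erase i, M' i j * m :=
              Finset.sum_le_sum fun j _ =>
                mul_le_mul_of_nonneg_left (hmax j (Finset.mem_univ j)) (hM'_nonneg i j)
          _ = (1 - d) * m := by rw [← Finset.sum_mul, hrow_erase]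
      have hzd : ‖z - (d : ℂ)‖ ≤ 1 - d := le_of_mul_le_mul_right habs hm_pos
      by_contra hge
      push_neg at hge
      have h2 : (z.re - d) ^ 2 + z.im ^ 2 ≤ (1 - d) ^ 2 := by
        have h3 : ‖z - (d : ℂ)‖ ^ 2 ≤ (1 - d) ^ 2 :=
          pow_le_pow_left₀ (norm_nonneg _) hzd 2
        rw [Complex.sq_norm, Complex.normSq_apply] at h3
        simp only [Complex.sub_re, Complex.sub_im, Complex.ofReal_re, Complex.ofReal_im,
          sub_zero] at h3
        nlinarith [h3]
      have h4 : 1 ≤ z.re ^ 2 + z.im ^ 2 := by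
        have := Complex.sq_norm z
        rw [Complex.normSq_apply] at this
        nlinarith [hge]
      have ha1 : 1 ≤ z.re := by nlinarith
      have hb0 : z.im = 0 := by
        have : z.im ^ 2 ≤ 0 := by
          nlinarith [mul_nonneg (sub_nonneg.2 ha1) (show (0:ℝ) ≤ z.re + 1 - 2 * d by linarith)]
        have h5 : z.im ^ 2 = 0 := le_antisymm this (sq_nonneg _)
        exact pow_eq_zero_iff (by norm_num) |>.1 h5
      have ha2 : z.re ≤ 1 := by nlinarith
      exact hz1 (Complex.ext (by simp; linarith) (by simp [hb0]))
  have hmem := Set.Nonempty.csSup_mem hS_ne hS_fin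
  exact hbound _ hmem
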